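/- Assume each F_k (k = 1,…,K) is nonempty, let f_i : ℕ → ℝ (i = 1,…,n) be arbitrary functions, let N_i^C ∈ ℕ be capacities, and assume the set B = {N ∈ F_1 + ⋯ + F_K : N_i ≤ N_i^C for all i} is nonempty. Define the optimistic bilevel value V = sup { ∑_{i=1}^n f_i(∑_{k=1}^K u_k(i)) : y ∈ ℝ^n, u_k ∈ F_k maximizes v ↦ ⟨ρ_k + y, v⟩ over F_k for each k, and ∑_{k=1}^K u_k(i) ≤ N_i^C for all i }. Then V = max_{N ∈ B} ∑_{i=1}^n f_i(N_i), and both the supremum and the maximum are attained. -/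

import Mathlib

open Finset
open scoped Classical


open Finset

variable {n : ℕ}

/-- cost of a walk given as a list of vertices -/
def lcost (w : Fin n → Fin n → ℝ) : List (Fin n) → ℝ
  | [] => 0
  | [_] => 0
  | a :: b :: t => w a b + lcost w (b :: t)

lemma lcost_split (w : Fin n → Fin n → ℝ) (s : List (Fin n)) (j : Fin n) (t : List (Fin n)) :
    lcost w (s ++ j :: t) = lcost w (s ++ [j]) + lcost w (j :: t) := by
  induction s with
  | nil => simp [lcost]
  | cons a s ih =>
    cases s with
    | nil =>
      cases t with
      | nil => simp [lcost]
      | cons b t' => simp [lcost]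
    | cons b s' =>
      simp only [List.cons_append, lcost, List.append_eq] at *
      rw [ih]; ring

lemma lcost_concat (w : Fin n → Fin n → ℝ) (l : List (Fin n)) (i x : Fin n)
    (h : l.getLast? = some i) : lcost w (l ++ [x]) = lcost w l + w i x := by
  induction l with
  | nil => simp at h
  | cons a s ih =>
    cases s with
    | nil =>
      simp [List.getLast?] at h
      subst h; simp [lcost]
    | cons b s' =>
      rw [List.getLast?_cons_cons] at h
      have := ih h
      simp only [List.cons_append, lcost, List.append_eq] at *
      rw [this]; ring

lemma exists_potential (w : Fin n → Fin n → ℝ)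
    (H : ∀ (a : Fin n) (l : List (Fin n)), (a :: l).Nodup → 0 ≤ lcost w ((a :: l) ++ [a])) :
    ∃ y : Fin n → ℝ, ∀ i j, y j ≤ y i + w i j := by
  classical
  set S : Fin n → Set ℝ :=
    fun j => (lcost w) '' {l : List (Fin n) | l ≠ [] ∧ l.Nodup ∧ l.getLast? = some j} with hS
  have hfin : ∀ j, (S j).Finite := by
    intro j
    apply Set.Finite.image
    apply (List.finite_length_le (Fin n) n).subset
    intro l hl
    exact hl.2.1.length_le_card.trans (by simp)
  have hne : ∀ j, (S j).Nonempty := fun j =>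
    ⟨lcost w [j], ⟨[j], ⟨by simp, by simp, by simp⟩, rfl⟩⟩
  refine ⟨fun j => sInf (S j), fun i j => ?_⟩
  obtain ⟨l, ⟨hl0, hlnd, hllast⟩, hlc⟩ := (hne i).csInf_mem (hfin i)
  by_cases hj : j ∈ l
  · obtain ⟨s, t, rfl⟩ := List.append_of_mem hj
    have hqsub : (j :: t).Sublist (s ++ j :: t) := List.sublist_append_right s (j :: t)
    have hqnd : (j :: t).Nodup := hlnd.sublist hqsub
    have hqlast : (j :: t).getLast? = some i := by
      rw [← hllast]; exact (List.getLast?_append_of_ne_nil s (by simp)).symm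
    have hcyc := H j t hqnd
    rw [lcost_concat w (j :: t) i j hqlast] at hcyc
    have hpsub : (s ++ [j]).Sublist (s ++ j :: t) :=
      (List.Sublist.cons₂ j (List.nil_sublist t)).append_left s
    have hpmem : lcost w (s ++ [j]) ∈ S j :=
      ⟨s ++ [j], ⟨by simp, hlnd.sublist hpsub, List.getLast?_concat⟩, rfl⟩
    have h1 : sInf (S j) ≤ lcost w (s ++ [j]) := csInf_le (hfin j).bddBelow hpmem
    have h2 : lcost w (s ++ j :: t) = lcost w (s ++ [j]) + lcost w (j :: t) :=
      lcost_split w s j t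
    linarith [hlc ▸ h2]
  · have hnd' : (l ++ [j]).Nodup := by
      rw [List.nodup_append]
      exact ⟨hlnd, by simp, by
        intro a ha b hb
        simp only [List.mem_singleton] at hb
        subst hb
        intro hab
        exact hj (hab ▸ ha)⟩
    have hmem : lcost w (l ++ [j]) ∈ S j :=
      ⟨l ++ [j], ⟨by simp, hnd', List.getLast?_concat⟩, rfl⟩
    have h1 : sInf (S j) ≤ lcost w (l ++ [j]) := csInf_le (hfin j).bddBelow hmem
    rw [lcost_concat w l i j hllast] at h1
    linarith




lemma lcost_zip (w : Fin n → Fin n → ℝ) : ∀ l : List (Fin n),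
    lcost w l = (List.zipWith w l l.tail).sum
  | [] => by simp [lcost]
  | [a] => by simp [lcost]
  | a :: b :: t => by
    simp only [lcost, List.tail_cons, List.zipWith_cons_cons, List.sum_cons]
    rw [lcost_zip w (b :: t)]
    rfl

lemma zip_sum (w : Fin n → Fin n → ℝ) :
    ∀ (l1 l2 : List (Fin n)) (h : l2.length ≤ l1.length),
    (List.zipWith w l1 l2).sum
      = ∑ t : Fin l2.length, w (l1.get ⟨t, lt_of_lt_of_le t.2 h⟩) (l2.get t)
  | _, [], _ => by simp
  | [], b :: l2, h => by simp at h
  | a :: l1, b :: l2, h => by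
    simp only [List.zipWith_cons_cons, List.sum_cons, List.length_cons]
    rw [zip_sum w l1 l2 (Nat.succ_le_succ_iff.mp h)]
    rw [Fin.sum_univ_succ]
    simp



lemma rotation_exchange {n K : ℕ} (J : Fin K → Set (Fin n)) (ρ : Fin K → Fin n → ℝ)
    (R : Fin K → ℕ) (N : Fin n → ℕ)
    (u : Fin K → Fin n → ℕ)
    (hmem : ∀ k, (∀ i, u k i ≤ 1) ∧ (∑ i, u k i) = R k ∧ ∀ i ∈ J k, u k i = 0)
    (hsum : ∀ i, ∑ k, u k i = N i)
    (hmax : ∀ u' : Fin K → Fin n → ℕ,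
      (∀ k, (∀ i, u' k i ≤ 1) ∧ (∑ i, u' k i) = R k ∧ ∀ i ∈ J k, u' k i = 0) →
      (∀ i, ∑ k, u' k i = N i) →
      ∑ k', ∑ i, ρ k' i * (u' k' i : ℝ) ≤ ∑ k', ∑ i, ρ k' i * (u k' i : ℝ))
    (m : ℕ) (a b : Fin m → Fin n) (ha : Function.Injective a) (hb : Function.Injective b)
    (hab : ∀ i, (∃ t, a t = i) ↔ (∃ t, b t = i))
    (k : Fin m → Fin K)
    (hk : ∀ t, u (k t) (a t) = 1 ∧ u (k t) (b t) = 0 ∧ b t ∉ J (k t)) :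
    0 ≤ ∑ t, (ρ (k t) (a t) - ρ (k t) (b t)) := by
  have hA1 : ∀ k' i, (∃ t, k t = k' ∧ a t = i) → u k' i = 1 := by
    rintro k' i ⟨t, rfl, rfl⟩; exact (hk t).1
  have hB0 : ∀ k' i, (∃ t, k t = k' ∧ b t = i) → u k' i = 0 := by
    rintro k' i ⟨t, rfl, rfl⟩; exact (hk t).2.1
  set u' : Fin K → Fin n → ℕ := fun k' i =>
    if ∃ t, k t = k' ∧ a t = i then 0
    else if ∃ t, k t = k' ∧ b t = i then 1 else u k' i with hu'
  -- the key pointwise identity over ℤ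
  have key : ∀ k' i, (u' k' i : ℤ) = (u k' i : ℤ)
      + (if ∃ t, k t = k' ∧ b t = i then 1 else 0)
      - (if ∃ t, k t = k' ∧ a t = i then 1 else 0) := by
    intro k' i
    by_cases hA : ∃ t, k t = k' ∧ a t = i
    · have h1 := hA1 k' i hA
      have h2 : ¬ ∃ t, k t = k' ∧ b t = i := by
        intro hBex; have := hB0 k' i hBex; omega
      simp [hu', hA, h2, h1]
    · by_cases hBex : ∃ t, k t = k' ∧ b t = i
      · have h0 := hB0 k' i hBex
        simp [hu', hA, hBex, h0]
      · simp [hu', hA, hBex]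
  -- fibers
  set T : Fin K → Finset (Fin m) := fun k' => univ.filter (fun t => k t = k') with hT
  have memA : ∀ k' i, (∃ t, k t = k' ∧ a t = i) ↔ i ∈ (T k').image a := by
    intro k' i; simp [hT, eq_comm]
  have memB : ∀ k' i, (∃ t, k t = k' ∧ b t = i) ↔ i ∈ (T k').image b := by
    intro k' i; simp [hT, eq_comm]
  have cardA : ∀ k', ((T k').image a).card = (T k').card :=
    fun k' => Finset.card_image_of_injective _ ha
  have cardB : ∀ k', ((T k').image b).card = (T k').card :=
    fun k' => Finset.card_image_of_injective _ hb
  -- u' is feasible: each u' k' is in F k'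
  have hmem' : ∀ k', (∀ i, u' k' i ≤ 1) ∧ (∑ i, u' k' i) = R k' ∧ ∀ i ∈ J k', u' k' i = 0 := by
    intro k'
    refine ⟨?_, ?_, ?_⟩
    · intro i
      simp only [hu']
      split_ifs with h1 h2
      · omega
      · omega
      · exact (hmem k').1 i
    · -- sum over i
      have : ∑ i, (u' k' i : ℤ) = ∑ i, (u k' i : ℤ) := by
        rw [Finset.sum_congr rfl (fun i _ => key k' i)]
        rw [Finset.sum_sub_distrib, Finset.sum_add_distrib]
        have eA : ∑ i, (if ∃ t, k t = k' ∧ a t = i then (1 : ℤ) else 0)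
            = ((T k').image a).card := by
          rw [Finset.sum_congr rfl (fun i _ => by rw [if_congr (memA k' i) rfl rfl])]
          rw [Finset.sum_ite_mem, Finset.univ_inter, Finset.sum_const]
          simp
        have eB : ∑ i, (if ∃ t, k t = k' ∧ b t = i then (1 : ℤ) else 0)
            = ((T k').image b).card := by
          rw [Finset.sum_congr rfl (fun i _ => by rw [if_congr (memB k' i) rfl rfl])]
          rw [Finset.sum_ite_mem, Finset.univ_inter, Finset.sum_const]
          simp
        rw [eA, eB, cardA, cardB]
        ring
      have hN : ∑ i, u' k' i = ∑ i, u k' i := by exact_mod_cast this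
      rw [hN, (hmem k').2.1]
    · intro i hi
      simp only [hu']
      split_ifs with h1 h2
      · rfl
      · obtain ⟨t, hkt, hbt⟩ := h2
        exfalso
        apply (hk t).2.2
        rw [hbt, hkt]
        exact hi
      · exact (hmem k').2.2 i hi
  -- column sums are preserved
  have hsum' : ∀ i, ∑ k', u' k' i = N i := by
    intro i
    have hZ : ∑ k', (u' k' i : ℤ) = ∑ k', (u k' i : ℤ) := by
      rw [Finset.sum_congr rfl (fun k' _ => key k' i)]
      rw [Finset.sum_sub_distrib, Finset.sum_add_distrib]
      have eA : ∑ k', (if ∃ t, k t = k' ∧ a t = i then (1 : ℤ) else 0)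
          = (if ∃ t, a t = i then (1 : ℤ) else 0) := by
        by_cases hex : ∃ t, a t = i
        · obtain ⟨t0, ht0⟩ := hex
          have : ∀ k', (∃ t, k t = k' ∧ a t = i) ↔ k' = k t0 := by
            intro k'
            constructor
            · rintro ⟨t, rfl, hat⟩; rw [ha (hat.trans ht0.symm)]
            · rintro rfl; exact ⟨t0, rfl, ht0⟩
          rw [Finset.sum_congr rfl (fun k' _ => by rw [if_congr (this k') rfl rfl])]
          rw [if_pos ⟨t0, ht0⟩]
          simp
        · have : ∀ k', ¬ (∃ t, k t = k' ∧ a t = i) := by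
            rintro k' ⟨t, _, hat⟩; exact hex ⟨t, hat⟩
          simp [this, hex]
      have eB : ∑ k', (if ∃ t, k t = k' ∧ b t = i then (1 : ℤ) else 0)
          = (if ∃ t, b t = i then (1 : ℤ) else 0) := by
        by_cases hex : ∃ t, b t = i
        · obtain ⟨t0, ht0⟩ := hex
          have : ∀ k', (∃ t, k t = k' ∧ b t = i) ↔ k' = k t0 := by
            intro k'
            constructor
            · rintro ⟨t, rfl, hbt⟩; rw [hb (hbt.trans ht0.symm)]
            · rintro rfl; exact ⟨t0, rfl, ht0⟩
          rw [Finset.sum_congr rfl (fun k' _ => by rw [if_congr (this k') rfl rfl])]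
          rw [if_pos ⟨t0, ht0⟩]
          simp
        · have : ∀ k', ¬ (∃ t, k t = k' ∧ b t = i) := by
            rintro k' ⟨t, _, hbt⟩; exact hex ⟨t, hbt⟩
          simp [this, hex]
      rw [eA, eB, if_congr (hab i).symm rfl rfl]
      ring
    have hN : ∑ k', u' k' i = ∑ k', u k' i := by exact_mod_cast hZ
    rw [hN, hsum i]
  -- compute the objective difference
  have keyR : ∀ k' i, (u' k' i : ℝ) = (u k' i : ℝ)
      + (if i ∈ (T k').image b then 1 else 0)
      - (if i ∈ (T k').image a then 1 else 0) := by
    intro k' i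
    have := key k' i
    rw [if_congr (memA k' i) rfl rfl, if_congr (memB k' i) rfl rfl] at this
    exact_mod_cast this
  have hdiff : ∑ k', ∑ i, ρ k' i * (u' k' i : ℝ)
      = ∑ k', ∑ i, ρ k' i * (u k' i : ℝ) + ∑ t, (ρ (k t) (b t) - ρ (k t) (a t)) := by
    have e1 : ∀ k', ∑ i, ρ k' i * (u' k' i : ℝ)
        = ∑ i, ρ k' i * (u k' i : ℝ)
          + (∑ t ∈ T k', (ρ k' (b t) - ρ k' (a t))) := by
      intro k'
      rw [Finset.sum_congr rfl (fun i _ => by rw [keyR k' i])]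
      have expand : ∀ i, ρ k' i * ((u k' i : ℝ)
          + (if i ∈ (T k').image b then 1 else 0)
          - (if i ∈ (T k').image a then 1 else 0))
          = ρ k' i * (u k' i : ℝ)
            + (if i ∈ (T k').image b then ρ k' i else 0)
            - (if i ∈ (T k').image a then ρ k' i else 0) := by
        intro i; split_ifs <;> ring
      rw [Finset.sum_congr rfl (fun i _ => expand i)]
      rw [Finset.sum_sub_distrib, Finset.sum_add_distrib]
      rw [Finset.sum_ite_mem, Finset.univ_inter, Finset.sum_ite_mem, Finset.univ_inter]
      rw [Finset.sum_image (fun x _ y _ h => hb h), Finset.sum_image (fun x _ y _ h => ha h)]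
      rw [Finset.sum_sub_distrib]
      ring
    rw [Finset.sum_congr rfl (fun k' _ => e1 k'), Finset.sum_add_distrib]
    congr 1
    have e2 : ∀ k', ∑ t ∈ T k', (ρ k' (b t) - ρ k' (a t))
        = ∑ t ∈ univ.filter (fun t => k t = k'), (ρ (k t) (b t) - ρ (k t) (a t)) := by
      intro k'
      apply Finset.sum_congr rfl
      intro t ht
      simp only [hT, Finset.mem_filter] at ht
      rw [ht.2]
    rw [Finset.sum_congr rfl (fun k' _ => e2 k')]
    exact Finset.sum_fiberwise _ _ _
  have := hmax u' hmem' hsum'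
  rw [hdiff] at this
  have h2 : ∑ t, (ρ (k t) (b t) - ρ (k t) (a t)) ≤ 0 := by linarith
  have h3 : ∑ t, (ρ (k t) (a t) - ρ (k t) (b t))
      = - ∑ t, (ρ (k t) (b t) - ρ (k t) (a t)) := by
    rw [← Finset.sum_neg_distrib]
    apply Finset.sum_congr rfl; intro t _; ring
  rw [h3]; linarith



lemma opt_of_pairwise {n : ℕ} (c : Fin n → ℝ) (Jk : Set (Fin n)) (Rk : ℕ)
    (u v : Fin n → ℕ)
    (hu1 : ∀ i, u i ≤ 1) (hu2 : ∑ i, u i = Rk)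
    (hv1 : ∀ i, v i ≤ 1) (hv2 : ∑ i, v i = Rk) (hv3 : ∀ i ∈ Jk, v i = 0)
    (h : ∀ i j, u i = 1 → u j = 0 → j ∉ Jk → c j ≤ c i) :
    ∑ i, c i * (v i : ℝ) ≤ ∑ i, c i * (u i : ℝ) := by
  classical
  set A : Finset (Fin n) := univ.filter (fun i => u i = 1 ∧ v i = 0) with hA
  set B : Finset (Fin n) := univ.filter (fun i => u i = 0 ∧ v i = 1) with hBd
  have hvals : ∀ i, (u i = 0 ∨ u i = 1) ∧ (v i = 0 ∨ v i = 1) := fun i =>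
    ⟨Nat.le_one_iff_eq_zero_or_eq_one.mp (hu1 i),
     Nat.le_one_iff_eq_zero_or_eq_one.mp (hv1 i)⟩
  have key : ∀ i, (u i : ℤ) - v i =
      (if i ∈ A then 1 else 0) - (if i ∈ B then 1 else 0) := by
    intro i
    rcases (hvals i).1 with h0 | h0 <;> rcases (hvals i).2 with g0 | g0 <;>
      simp [hA, hBd, h0, g0]
  have hzero : ∑ i, ((u i : ℤ) - v i) = 0 := by
    rw [Finset.sum_sub_distrib]
    have e1 : ∑ i, (u i : ℤ) = (Rk : ℤ) := by exact_mod_cast hu2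
    have e2 : ∑ i, (v i : ℤ) = (Rk : ℤ) := by exact_mod_cast hv2
    rw [e1, e2, sub_self]
  have hcard : A.card = B.card := by
    have h2 : ∑ i, ((if i ∈ A then (1 : ℤ) else 0) - (if i ∈ B then 1 else 0)) = 0 := by
      rw [← Finset.sum_congr rfl (fun i _ => (key i))]; exact hzero
    rw [Finset.sum_sub_distrib] at h2
    simp only [Finset.sum_ite_mem, Finset.univ_inter, Finset.sum_const, nsmul_eq_mul,
      mul_one] at h2
    omega
  -- the sum inequality
  have keyR : ∀ i, c i * (u i : ℝ) - c i * (v i : ℝ) =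
      (if i ∈ A then c i else 0) - (if i ∈ B then c i else 0) := by
    intro i
    rcases (hvals i).1 with h0 | h0 <;> rcases (hvals i).2 with g0 | g0 <;>
      simp [hA, hBd, h0, g0]
  have hBA : ∑ i ∈ B, c i ≤ ∑ i ∈ A, c i := by
    have e : B ≃ A := (Finset.equivOfCardEq hcard.symm)
    have : ∑ i ∈ B, c i = ∑ a : B, c a := (Finset.sum_coe_sort B c).symm
    rw [this, ← Equiv.sum_comp e.symm (fun x : B => c (x : Fin n))]
    rw [← Finset.sum_coe_sort A c]
    apply Finset.sum_le_sum
    intro a _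
    have haA : (a : Fin n) ∈ A := a.2
    have hbB : ((e.symm a : B) : Fin n) ∈ B := (e.symm a).2
    simp only [hA, Finset.mem_filter] at haA
    simp only [hBd, Finset.mem_filter] at hbB
    apply h _ _ haA.2.1 hbB.2.1
    intro hJ
    have := hv3 _ hJ
    omega
  have final : ∑ i, (c i * (u i : ℝ) - c i * (v i : ℝ)) =
      ∑ i ∈ A, c i - ∑ i ∈ B, c i := by
    rw [Finset.sum_congr rfl (fun i _ => keyR i), Finset.sum_sub_distrib]
    simp [Finset.sum_ite_mem]
  rw [Finset.sum_sub_distrib] at final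
  linarith
/-- Decomposition theorem: the optimistic bilevel value (supremum of
`∑ᵢ fᵢ(∑ₖ uₖ(i))` over price vectors `y` and optimal responses `uₖ ∈ Fₖ`
respecting the capacities) equals the maximum of `∑ᵢ fᵢ(Nᵢ)` over the feasible
set `B = {N ∈ F₁ + ⋯ + F_K : Nᵢ ≤ Nᵢᶜ}`, and both are attained. -/
theorem stmt_11 (n K : ℕ) (R : Fin K → ℕ) (hR : ∀ k, R k ≤ n)
    (J : Fin K → Set (Fin n)) (ρ : Fin K → Fin n → ℝ)
    (F : Fin K → Set (Fin n → ℕ))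
    (hF : ∀ k, F k = {u : Fin n → ℕ |
      (∀ i, u i ≤ 1) ∧ (∑ i, u i) = R k ∧ ∀ i ∈ J k, u i = 0})
    (hne : ∀ k, (F k).Nonempty)
    (f : Fin n → ℕ → ℝ) (Ncap : Fin n → ℕ)
    (B : Set (Fin n → ℕ))
    (hB : B = {N : Fin n → ℕ |
      (∃ u : Fin K → Fin n → ℕ, (∀ k, u k ∈ F k) ∧ (∑ k, u k) = N)
      ∧ ∀ i, N i ≤ Ncap i})
    (hBne : B.Nonempty) :
    ∃ m : ℝ,
      IsGreatest {v : ℝ | ∃ (y : Fin n → ℝ) (u : Fin K → Fin n → ℕ),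
          (∀ k, u k ∈ F k ∧ ∀ w ∈ F k,
            ∑ i, (ρ k i + y i) * (w i : ℝ) ≤ ∑ i, (ρ k i + y i) * (u k i : ℝ))
          ∧ (∀ i, (∑ k, u k i) ≤ Ncap i)
          ∧ v = ∑ i, f i (∑ k, u k i)} m
      ∧ IsGreatest ((fun N : Fin n → ℕ => ∑ i, f i (N i)) '' B) m := by
  classical
  -- B is finite
  have hBfin : B.Finite := by
    apply Set.Finite.subset (Set.Finite.pi (fun _ : Fin n => Set.finite_Iic K))
    intro N hN
    rw [hB] at hN
    obtain ⟨⟨u, hu, husum⟩, _⟩ := hN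
    rw [Set.mem_pi]
    intro i _
    rw [Set.mem_Iic, ← husum]
    have h1 : (∑ k, u k) i = ∑ k, u k i := Finset.sum_apply i univ u
    rw [h1]
    calc ∑ k, u k i ≤ ∑ _k : Fin K, 1 := by
          apply Finset.sum_le_sum
          intro k _
          have := hu k; rw [hF k] at this
          exact this.1 i
    _ = K := by simp
  obtain ⟨Nstar, hNstar, hNmax⟩ := Set.exists_max_image B (fun N => ∑ i, f i (N i)) hBfin hBne
  -- every N ∈ B is achievable by an optimal response profile
  have achievable : ∀ N, N ∈ B → ∃ (y : Fin n → ℝ) (u : Fin K → Fin n → ℕ),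
      (∀ k, u k ∈ F k ∧ ∀ w' ∈ F k,
        ∑ i, (ρ k i + y i) * (w' i : ℝ) ≤ ∑ i, (ρ k i + y i) * (u k i : ℝ))
      ∧ (∀ i, ∑ k, u k i = N i) := by
    intro N hN
    rw [hB] at hN
    obtain ⟨⟨u0, hu0, hu0sum⟩, _hcap⟩ := hN
    set D : Set (Fin K → Fin n → ℕ) :=
      {u | (∀ k, u k ∈ F k) ∧ ∀ i, ∑ k, u k i = N i} with hD
    have hDne : D.Nonempty := by
      refine ⟨u0, hu0, fun i => ?_⟩
      rw [← hu0sum]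
      exact (Finset.sum_apply i univ u0).symm
    have hDfin : D.Finite := by
      apply Set.Finite.subset
        (Set.Finite.pi (fun _ : Fin K => Set.Finite.pi (fun _ : Fin n => Set.finite_Iic 1)))
      intro u hu
      rw [Set.mem_pi]
      intro k _
      rw [Set.mem_pi]
      intro i _
      rw [Set.mem_Iic]
      have := hu.1 k; rw [hF k] at this
      exact this.1 i
    obtain ⟨us, hus, husmax⟩ :=
      Set.exists_max_image D (fun u => ∑ k', ∑ i, ρ k' i * (u k' i : ℝ)) hDfin hDne
    have husF : ∀ k, (∀ i, us k i ≤ 1) ∧ (∑ i, us k i) = R k ∧ ∀ i ∈ J k, us k i = 0 := by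
      intro k; have := hus.1 k; rwa [hF k] at this
    have hussum : ∀ i, ∑ k, us k i = N i := hus.2
    have hmaxD : ∀ u' : Fin K → Fin n → ℕ,
        (∀ k, (∀ i, u' k i ≤ 1) ∧ (∑ i, u' k i) = R k ∧ ∀ i ∈ J k, u' k i = 0) →
        (∀ i, ∑ k, u' k i = N i) →
        ∑ k', ∑ i, ρ k' i * (u' k' i : ℝ) ≤ ∑ k', ∑ i, ρ k' i * (us k' i : ℝ) := by
      intro u' h1 h2
      exact husmax u' ⟨fun k => by rw [hF k]; exact h1 k, h2⟩
    -- weights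
    set C : ℝ := ∑ k', ∑ i, |ρ k' i| with hCdef
    have hC0 : 0 ≤ C :=
      Finset.sum_nonneg fun _ _ => Finset.sum_nonneg fun _ _ => abs_nonneg _
    have hCb : ∀ k i, |ρ k i| ≤ C := by
      intro k i
      calc |ρ k i| ≤ ∑ i', |ρ k i'| :=
            Finset.single_le_sum (f := fun i' => |ρ k i'|) (fun _ _ => abs_nonneg _) (mem_univ i)
      _ ≤ C := Finset.single_le_sum (f := fun k' => ∑ i', |ρ k' i'|)
            (fun _ _ => Finset.sum_nonneg fun _ _ => abs_nonneg _) (mem_univ k)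
    set M : ℝ := 2 * C * n + 1 with hMdef
    set wt : Fin n → Fin n → ℝ := fun i j =>
      if h : (univ.filter (fun k' => us k' i = 1 ∧ us k' j = 0 ∧ j ∉ J k')).Nonempty
      then (univ.filter (fun k' => us k' i = 1 ∧ us k' j = 0 ∧ j ∉ J k')).inf' h
             (fun k' => ρ k' i - ρ k' j)
      else M with hwt
    have hwlb : ∀ i j, -(2 * C) ≤ wt i j := by
      intro i j
      simp only [hwt]
      split_ifs with h
      · apply Finset.le_inf'
        intro k' _
        have h1 := hCb k' i
        have h2 := hCb k' j
        have h3 := neg_abs_le (ρ k' i)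
        have h4 := le_abs_self (ρ k' j)
        linarith
      · have h5 : (0:ℝ) ≤ 2 * C * n := by positivity
        simp only [hMdef]
        linarith
    have hwle : ∀ k' i j, us k' i = 1 → us k' j = 0 → j ∉ J k' →
        wt i j ≤ ρ k' i - ρ k' j := by
      intro k' i j h1 h2 h3
      have hmem : k' ∈ univ.filter (fun k' => us k' i = 1 ∧ us k' j = 0 ∧ j ∉ J k') := by
        simp only [Finset.mem_filter, Finset.mem_univ, true_and]
        exact ⟨h1, h2, h3⟩
      simp only [hwt]
      rw [dif_pos ⟨k', hmem⟩]
      exact Finset.inf'_le _ hmem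
    -- no negative simple cycles
    have Hcyc : ∀ (a0 : Fin n) (l' : List (Fin n)), (a0 :: l').Nodup →
        0 ≤ lcost wt ((a0 :: l') ++ [a0]) := by
      intro a0 l' hnd
      by_contra hneg
      push_neg at hneg
      set l : List (Fin n) := a0 :: l' with hl
      set r : List (Fin n) := l.rotate 1 with hr
      have hrl : r.length = l.length := List.length_rotate l 1
      have hrtail : (l ++ [a0]).tail = r := by
        rw [hr, hl, List.rotate_cons_succ, List.rotate_zero]
        rfl
      have hrnd : r.Nodup := List.nodup_rotate.mpr hnd
      set av : Fin r.length → Fin n := fun t => l.get ⟨t, by rw [← hrl]; exact t.2⟩ with hav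
      set bv : Fin r.length → Fin n := fun t => r.get t with hbv
      have hlen1 : r.length ≤ (l ++ [a0]).length := by
        rw [hrl]; simp
      have hsumedges : lcost wt (l ++ [a0]) = ∑ t : Fin r.length, wt (av t) (bv t) := by
        rw [lcost_zip, hrtail, zip_sum wt (l ++ [a0]) r hlen1]
        apply Finset.sum_congr rfl
        intro t _
        congr 1
        simp only [hav, List.get_eq_getElem]
        rw [List.getElem_append_left]
      have havinj : Function.Injective av := by
        intro t s h
        simp only [hav] at h
        have h2 := (List.Nodup.get_inj_iff hnd).mp h
        exact Fin.ext (by simpa using congrArg Fin.val h2)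
      have hbvinj : Function.Injective bv := by
        intro t s h
        exact (List.Nodup.get_inj_iff hrnd).mp h
      have habrange : ∀ i, (∃ t, av t = i) ↔ (∃ t, bv t = i) := by
        intro i
        have hmeml : i ∈ l ↔ ∃ t, av t = i := by
          constructor
          · intro hi
            obtain ⟨s, hs⟩ := List.mem_iff_get.mp hi
            refine ⟨⟨s, by rw [hrl]; exact s.2⟩, ?_⟩
            simp only [hav]
            rw [← hs]
          · rintro ⟨t, rfl⟩
            simp only [hav]
            exact List.get_mem l _
        have hmemr : i ∈ r ↔ ∃ t, bv t = i := by
          constructor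
          · intro hi
            obtain ⟨s, hs⟩ := List.mem_iff_get.mp hi
            exact ⟨s, hs⟩
          · rintro ⟨t, rfl⟩
            exact List.get_mem r _
        rw [← hmeml, ← hmemr, hr, List.mem_rotate]
      by_cases hall : ∀ t : Fin r.length,
          (univ.filter (fun k' => us k' (av t) = 1 ∧ us k' (bv t) = 0 ∧ bv t ∉ J k')).Nonempty
      · have hkf : ∀ t : Fin r.length, ∃ k',
            (us k' (av t) = 1 ∧ us k' (bv t) = 0 ∧ bv t ∉ J k')
            ∧ wt (av t) (bv t) = ρ k' (av t) - ρ k' (bv t) := by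
          intro t
          obtain ⟨k', hk'mem, heq⟩ :=
            Finset.exists_mem_eq_inf' (hall t) (fun k' => ρ k' (av t) - ρ k' (bv t))
          refine ⟨k', ?_, ?_⟩
          · simpa using hk'mem
          · simp only [hwt]
            rw [dif_pos (hall t)]
            exact heq
        choose kf hkf1 hkf2 using hkf
        have hrot := rotation_exchange J ρ R N us husF hussum hmaxD r.length av bv
          havinj hbvinj habrange kf hkf1
        rw [hsumedges, Finset.sum_congr rfl (fun t _ => hkf2 t)] at hneg
        linarith
      · push_neg at hall
        obtain ⟨t0, ht0⟩ := hall
        have hwt0 : wt (av t0) (bv t0) = M := by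
          simp only [hwt]
          rw [dif_neg (Finset.not_nonempty_iff_eq_empty.mpr ht0)]
        have hlenn : (r.length : ℝ) ≤ (n : ℝ) := by
          have h6 := hnd.length_le_card
          simp only [Fintype.card_fin] at h6
          rw [hrl]
          exact_mod_cast h6
        have hsplit : ∑ t : Fin r.length, wt (av t) (bv t)
            = wt (av t0) (bv t0) + ∑ t ∈ univ.erase t0, wt (av t) (bv t) :=
          (Finset.add_sum_erase univ _ (mem_univ t0)).symm
        have hlow : ((univ.erase t0).card) • (-(2*C)) ≤ ∑ t ∈ univ.erase t0, wt (av t) (bv t) :=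
          Finset.card_nsmul_le_sum _ _ _ (fun t _ => hwlb _ _)
        rw [nsmul_eq_mul] at hlow
        have hcard : (((univ.erase t0).card : ℕ) : ℝ) ≤ (n : ℝ) := by
          have h7 : (univ.erase t0).card ≤ (univ : Finset (Fin r.length)).card :=
            Finset.card_le_card (Finset.erase_subset _ _)
          simp only [Finset.card_univ, Fintype.card_fin] at h7
          calc (((univ.erase t0).card : ℕ) : ℝ) ≤ (r.length : ℝ) := by exact_mod_cast h7
          _ ≤ n := hlenn
        rw [hsumedges, hsplit, hwt0] at hneg
        have h2C : (0:ℝ) ≤ 2 * C := by linarith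
        have h8 : 2 * C * (((univ.erase t0).card : ℕ) : ℝ) ≤ 2 * C * n :=
          mul_le_mul_of_nonneg_left hcard h2C
        simp only [hMdef] at hneg
        nlinarith [hlow, h8]
    obtain ⟨y, hy⟩ := exists_potential wt Hcyc
    refine ⟨y, us, fun k => ⟨hus.1 k, ?_⟩, hussum⟩
    intro w' hw'
    rw [hF k] at hw'
    apply opt_of_pairwise (fun i => ρ k i + y i) (J k) (R k) (us k) w'
      (husF k).1 (husF k).2.1 hw'.1 hw'.2.1 hw'.2.2
    intro i j h1 h0 hJ
    have h2 := hwle k i j h1 h0 hJ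
    have h3 := hy i j
    linarith
  -- assemble
  obtain ⟨y, u, hopt, husum⟩ := achievable Nstar hNstar
  have hcapstar : ∀ i, Nstar i ≤ Ncap i := by
    have := hNstar; rw [hB] at this; exact this.2
  refine ⟨∑ i, f i (Nstar i), ⟨⟨y, u, hopt, ?_, ?_⟩, ?_⟩, ⟨Nstar, hNstar, rfl⟩, ?_⟩
  · intro i
    rw [husum i]
    exact hcapstar i
  · apply Finset.sum_congr rfl
    intro i _
    rw [husum i]
  · rintro v ⟨y', u', hopt', hcap', rfl⟩
    have hN'B : (fun i => ∑ k, u' k i) ∈ B := by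
      rw [hB]
      refine ⟨⟨u', fun k => (hopt' k).1, ?_⟩, hcap'⟩
      funext i
      exact Finset.sum_apply i univ u'
    exact hNmax _ hN'B
  · rintro v ⟨N, hN, rfl⟩
    exact hNmax N hN
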